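/- arXiv:1611.08681 — 5 statements merged into one kernel-verified Lean document; each statement's English description precedes it below -/
import Mathlib

section
/- Adding a row that is a convex combination of the existing rows does not change the value of a zero-sum matrix game: if O' : Fin (m+1) → Fin n → ℝ agrees with O on the first m rows and its last row satisfies O' (Fin.last m) j = Σ_{i ∈ Fin m} λ i * O i j for all j, where λ ∈ stdSimplex ℝ (Fin m), then val O' = val O. -/
/-- The column player's guaranteed (minimal) payoff against mixed row strategy `p`. -/
noncomputable def minPay {m n : ℕ} (O : Fin m → Fin n → ℝ) (p : Fin m → ℝ) : ℝ :=
  ⨅ j : Fin n, ∑ i, p i * O i j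

/-- The (lower) value of the zero-sum matrix game with payoff matrix `O`. -/
noncomputable def gameVal {m n : ℕ} (O : Fin m → Fin n → ℝ) : ℝ :=
  ⨆ p : {p : Fin m → ℝ // p ∈ stdSimplex ℝ (Fin m)}, minPay O p.1

/-- The value of the game when the row player is restricted to rows in `S`. -/
noncomputable def gameValOn {m n : ℕ} (O : Fin m → Fin n → ℝ) (S : Finset (Fin m)) : ℝ :=
  ⨆ p : {p : Fin m → ℝ // p ∈ stdSimplex ℝ (Fin m) ∧ ∀ i ∉ S, p i = 0}, minPay O p.1

/-- Adding a row that is a convex combination of the existing rows does not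
change the value of the zero-sum matrix game. -/
theorem gameVal_add_convex_row {m n : ℕ} (hm : 1 ≤ m) (hn : 1 ≤ n)
    (O : Fin m → Fin n → ℝ) (lam : Fin m → ℝ) (hlam : lam ∈ stdSimplex ℝ (Fin m))
    (O' : Fin (m + 1) → Fin n → ℝ)
    (hrows : ∀ i : Fin m, O' i.castSucc = O i)
    (hlast : ∀ j : Fin n, O' (Fin.last m) j = ∑ i, lam i * O i j) :
    gameVal O' = gameVal O := by
  obtain ⟨hlam0, hlam1⟩ := hlam
  have key : Set.range (fun q : {q : Fin (m+1) → ℝ // q ∈ stdSimplex ℝ (Fin (m+1))} =>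
      minPay O' q.1) = Set.range (fun p : {p : Fin m → ℝ // p ∈ stdSimplex ℝ (Fin m)} =>
      minPay O p.1) := by
    apply Set.Subset.antisymm
    · rintro x ⟨⟨q, hq0, hq1⟩, rfl⟩
      set p : Fin m → ℝ := fun i => q i.castSucc + q (Fin.last m) * lam i with hp
      have hpmem : p ∈ stdSimplex ℝ (Fin m) := by
        constructor
        · intro i
          exact add_nonneg (hq0 _) (mul_nonneg (hq0 _) (hlam0 i))
        · simp only [hp, Finset.sum_add_distrib, ← Finset.mul_sum, hlam1, mul_one]
          rw [← Fin.sum_univ_castSucc (f := q)]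
          exact hq1
      refine ⟨⟨p, hpmem⟩, ?_⟩
      simp only [minPay]
      refine iInf_congr fun j => ?_
      rw [Fin.sum_univ_castSucc (f := fun i => q i * O' i j)]
      simp only [hp, hrows, hlast, add_mul, Finset.sum_add_distrib, Finset.mul_sum]
      ring_nf
    · rintro x ⟨⟨p, hp0, hp1⟩, rfl⟩
      set q : Fin (m+1) → ℝ := Fin.snoc p 0 with hq
      have hqmem : q ∈ stdSimplex ℝ (Fin (m+1)) := by
        constructor
        · intro i
          induction i using Fin.lastCases with
          | last => simp [hq]
          | cast i => simp [hq, hp0 i]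
        · rw [Fin.sum_univ_castSucc (f := q)]
          simp [hq, hp1]
      refine ⟨⟨q, hqmem⟩, ?_⟩
      simp only [minPay]
      refine iInf_congr fun j => ?_
      rw [Fin.sum_univ_castSucc (f := fun i => q i * O' i j)]
      simp [hq, hrows]
  simp only [gameVal, iSup]
  rw [key]
end

section
/- A row that is weakly dominated by a convex combination of the other rows can be removed without changing the value: if i₀ ∈ Fin m, m ≥ 2, and there exists λ ∈ stdSimplex ℝ (Fin m) with λ i₀ = 0 such that O i₀ j ≤ Σ_i λ i * O i j for every column j, then the value of the game restricted to the rows Fin m \ {i₀} equals val O. -/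
/-- A row weakly dominated by a convex combination of the other rows can be
removed without changing the value of the game. -/
theorem gameVal_erase_dominated_row {m n : ℕ} (hm : 2 ≤ m) (hn : 1 ≤ n)
    (O : Fin m → Fin n → ℝ) (i₀ : Fin m)
    (lam : Fin m → ℝ) (hlam : lam ∈ stdSimplex ℝ (Fin m)) (hlam₀ : lam i₀ = 0)
    (hdom : ∀ j : Fin n, O i₀ j ≤ ∑ i, lam i * O i j) :
    gameValOn O (Finset.univ.erase i₀) = gameVal O := by
  have hn' : Nonempty (Fin n) := ⟨⟨0, hn⟩⟩
  set j₀ : Fin n := ⟨0, hn⟩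
  set C : ℝ := ∑ i, ∑ j, |O i j| with hC
  have hbound : ∀ p : Fin m → ℝ, p ∈ stdSimplex ℝ (Fin m) → minPay O p ≤ C := by
    intro p hp
    have h1 : minPay O p ≤ ∑ i, p i * O i j₀ := ciInf_le (Finite.bddBelow_range _) j₀
    refine h1.trans ?_
    have h2 : ∑ i, p i * O i j₀ ≤ ∑ i, |O i j₀| := by
      apply Finset.sum_le_sum
      intro i _
      have hp1 : p i ≤ 1 := by
        have := Finset.single_le_sum (f := p) (fun i _ => hp.1 i) (Finset.mem_univ i)
        rw [hp.2] at this; exact this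
      calc p i * O i j₀ ≤ p i * |O i j₀| :=
            mul_le_mul_of_nonneg_left (le_abs_self _) (hp.1 i)
        _ ≤ 1 * |O i j₀| := mul_le_mul_of_nonneg_right hp1 (abs_nonneg _)
        _ = |O i j₀| := one_mul _
    refine h2.trans ?_
    exact Finset.sum_le_sum fun i _ =>
      Finset.single_le_sum (f := fun j => |O i j|) (fun j _ => abs_nonneg _) (Finset.mem_univ j₀)
  have hbddFull : BddAbove (Set.range fun p : {p : Fin m → ℝ // p ∈ stdSimplex ℝ (Fin m)} =>
      minPay O p.1) := by
    refine ⟨C, ?_⟩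
    rintro x ⟨p, rfl⟩
    exact hbound p.1 p.2
  have hbddOn : BddAbove (Set.range fun p : {p : Fin m → ℝ //
      p ∈ stdSimplex ℝ (Fin m) ∧ ∀ i ∉ Finset.univ.erase i₀, p i = 0} => minPay O p.1) := by
    refine ⟨C, ?_⟩
    rintro x ⟨p, rfl⟩
    exact hbound p.1 p.2.1
  -- a witness strategy for nonemptiness of the restricted index type
  obtain ⟨i₁, hi₁⟩ : ∃ i₁ : Fin m, i₁ ≠ i₀ := by
    have : Nontrivial (Fin m) := Fin.nontrivial_iff_two_le.mpr hm
    exact exists_ne i₀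
  have hne : Nonempty {p : Fin m → ℝ //
      p ∈ stdSimplex ℝ (Fin m) ∧ ∀ i ∉ Finset.univ.erase i₀, p i = 0} := by
    refine ⟨⟨fun i => if i = i₁ then 1 else 0, ⟨?_, ?_⟩, ?_⟩⟩
    · intro i; dsimp only; split <;> norm_num
    · simp
    · intro i hi
      simp only [Finset.mem_erase, Finset.mem_univ, and_true, not_not] at hi
      subst hi
      simp [hi₁.symm]
  haveI := hne
  haveI : Nonempty {p : Fin m → ℝ // p ∈ stdSimplex ℝ (Fin m)} :=
    ⟨⟨hne.some.1, hne.some.2.1⟩⟩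
  apply le_antisymm
  · apply ciSup_le
    rintro ⟨p, hp, _⟩
    exact le_ciSup_of_le hbddFull ⟨p, hp⟩ le_rfl
  · apply ciSup_le
    rintro ⟨p, hp⟩
    set q : Fin m → ℝ := fun i => if i = i₀ then 0 else p i + p i₀ * lam i with hq
    have hsum : ∀ f : Fin m → ℝ,
        ∑ i, q i * f i = (∑ i, p i * f i - p i₀ * f i₀)
          + p i₀ * (∑ i, lam i * f i - lam i₀ * f i₀) := by
      intro f
      rw [← Finset.add_sum_erase Finset.univ (fun i => q i * f i) (Finset.mem_univ i₀)]
      have h0 : q i₀ * f i₀ = 0 := by simp [hq]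
      rw [h0, zero_add]
      have : ∀ i ∈ Finset.univ.erase i₀, q i * f i = p i * f i + p i₀ * (lam i * f i) := by
        intro i hi
        have hi' : i ≠ i₀ := (Finset.mem_erase.mp hi).1
        simp [hq, hi', add_mul, mul_assoc]
      rw [Finset.sum_congr rfl this, Finset.sum_add_distrib, ← Finset.mul_sum,
        Finset.sum_erase_eq_sub (Finset.mem_univ i₀),
        Finset.sum_erase_eq_sub (f := fun i => lam i * f i) (Finset.mem_univ i₀)]
    have hqsimplex : q ∈ stdSimplex ℝ (Fin m) := by
      constructor
      · intro i
        simp only [hq]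
        split
        · exact le_refl 0
        · exact add_nonneg (hp.1 i) (mul_nonneg (hp.1 i₀) (hlam.1 i))
      · have := hsum (fun _ => 1)
        simp only [mul_one] at this
        rw [this, hp.2, hlam.2, hlam₀]
        ring
    have hq0 : ∀ i ∉ Finset.univ.erase i₀, q i = 0 := by
      intro i hi
      simp only [Finset.mem_erase, Finset.mem_univ, and_true, not_not] at hi
      simp [hq, hi]
    have hle : minPay O p ≤ minPay O q := by
      apply le_ciInf
      intro j
      have h1 : minPay O p ≤ ∑ i, p i * O i j := ciInf_le (Finite.bddBelow_range _) j
      refine h1.trans ?_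
      rw [hsum (fun i => O i j)]
      have : p i₀ * O i₀ j ≤ p i₀ * ∑ i, lam i * O i j :=
        mul_le_mul_of_nonneg_left (hdom j) (hp.1 i₀)
      rw [hlam₀]
      ring_nf
      nlinarith [this]
    exact hle.trans (le_ciSup_of_le hbddOn ⟨q, hqsimplex, hq0⟩ le_rfl)
end

section
/- (Group II reduction) Suppose all entries of O are strictly positive, i₀ ∈ Fin m with m ≥ 2, and there exist nonnegative coefficients λ : Fin m → ℝ with λ i₀ = 0 and Σ_i λ i < 1 such that O i₀ j = Σ_i λ i * O i j for every column j. Then removing row i₀ does not change the value: the value of the game restricted to Fin m \ {i₀} equals val O. -/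
/-- (Group II reduction) If all entries of `O` are strictly positive and row `i₀`
equals a nonnegative combination of the other rows with coefficients summing to
less than one, then removing row `i₀` does not change the value. -/
theorem gameVal_erase_subconvex_row {m n : ℕ} (hm : 2 ≤ m) (hn : 1 ≤ n)
    (O : Fin m → Fin n → ℝ) (hpos : ∀ i j, 0 < O i j) (i₀ : Fin m)
    (lam : Fin m → ℝ) (hnonneg : ∀ i, 0 ≤ lam i) (hlam₀ : lam i₀ = 0)
    (hsum : ∑ i, lam i < 1)
    (heq : ∀ j : Fin n, O i₀ j = ∑ i, lam i * O i j) :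
    gameValOn O (Finset.univ.erase i₀) = gameVal O := by
  have hm0 : 0 < m := by omega
  have j₀ : Fin n := ⟨0, hn⟩
  have hFinNe : (Finset.univ : Finset (Fin m)).Nonempty := ⟨⟨0, hm0⟩, Finset.mem_univ _⟩
  obtain ⟨C, hC⟩ : ∃ C : ℝ, ∀ i, O i j₀ ≤ C :=
    ⟨Finset.univ.sup' hFinNe (fun i => O i j₀),
      fun i => Finset.le_sup' (fun i => O i j₀) (Finset.mem_univ i)⟩
  -- uniform bound on minPay over the simplex
  have hbdd : ∀ p : Fin m → ℝ, p ∈ stdSimplex ℝ (Fin m) → minPay O p ≤ C := by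
    intro p hp
    have h1 : minPay O p ≤ ∑ i, p i * O i j₀ :=
      ciInf_le (Set.Finite.bddBelow (Set.finite_range _)) j₀
    refine h1.trans ?_
    calc ∑ i, p i * O i j₀ ≤ ∑ i, p i * C := by
          refine Finset.sum_le_sum fun i _ => ?_
          exact mul_le_mul_of_nonneg_left (hC i) (hp.1 i)
      _ = C := by rw [← Finset.sum_mul, hp.2, one_mul]
  have hbA : BddAbove (Set.range fun p : {p : Fin m → ℝ // p ∈ stdSimplex ℝ (Fin m)} =>
      minPay O p.1) := ⟨C, by rintro x ⟨p, rfl⟩; exact hbdd p.1 p.2⟩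
  have hbB : BddAbove (Set.range fun p : {p : Fin m → ℝ // p ∈ stdSimplex ℝ (Fin m) ∧
      ∀ i ∉ Finset.univ.erase i₀, p i = 0} => minPay O p.1) :=
    ⟨C, by rintro x ⟨p, rfl⟩; exact hbdd p.1 p.2.1⟩
  -- nonemptiness of the two strategy sets
  haveI : Nontrivial (Fin m) := Fin.nontrivial_iff_two_le.mpr hm
  obtain ⟨i₁, hi₁⟩ := exists_ne i₀
  have hsimplex : ∀ i₂ : Fin m, (fun i => if i = i₂ then (1:ℝ) else 0) ∈ stdSimplex ℝ (Fin m) := by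
    intro i₂
    constructor
    · intro i; dsimp only; split <;> norm_num
    · simp
  haveI hNeB : Nonempty {p : Fin m → ℝ // p ∈ stdSimplex ℝ (Fin m) ∧
      ∀ i ∉ Finset.univ.erase i₀, p i = 0} := by
    refine ⟨⟨fun i => if i = i₁ then (1:ℝ) else 0, hsimplex i₁, ?_⟩⟩
    intro i hi
    simp only [Finset.mem_erase, Finset.mem_univ, and_true, not_not] at hi
    subst hi
    exact if_neg (Ne.symm hi₁)
  haveI hNeA : Nonempty {p : Fin m → ℝ // p ∈ stdSimplex ℝ (Fin m)} :=
    ⟨⟨_, hsimplex i₀⟩⟩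
  -- positivity of the total coefficient
  have hs : 0 < ∑ i, lam i := by
    rcases (Finset.sum_nonneg fun i _ => hnonneg i).lt_or_eq with h | h
    · exact h
    · exfalso
      have hall : ∀ i ∈ Finset.univ, lam i = 0 :=
        (Finset.sum_eq_zero_iff_of_nonneg fun i _ => hnonneg i).mp h.symm
      have h0 := heq j₀
      rw [Finset.sum_eq_zero (fun i hi => by rw [hall i hi, zero_mul])] at h0
      exact (hpos i₀ j₀).ne' h0
  have hsplit : ∀ f : Fin m → ℝ, ∑ i, (if i = i₀ then 0 else f i) = (∑ i, f i) - f i₀ := by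
    intro f
    rw [← Finset.sum_erase (f := fun i => if i = i₀ then (0:ℝ) else f i) (a := i₀) Finset.univ (if_pos rfl),
      Finset.sum_congr rfl (fun i hi => if_neg (Finset.ne_of_mem_erase hi))]
    exact Finset.sum_erase_eq_sub (Finset.mem_univ i₀)
  simp only [gameVal, gameValOn]
  refine le_antisymm (ciSup_le fun p => le_ciSup hbA ⟨p.1, p.2.1⟩) (ciSup_le ?_)
  rintro ⟨p, hp⟩
  set s := ∑ i, lam i with hsdef
  have hpi₀nn : 0 ≤ p i₀ := hp.1 i₀
  have hpi₀le : p i₀ ≤ 1 := by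
    rw [← hp.2]
    exact Finset.single_le_sum (fun i _ => hp.1 i) (Finset.mem_univ i₀)
  set q : Fin m → ℝ := fun i => if i = i₀ then 0 else p i + p i₀ * lam i with hqdef
  have hqnn : ∀ i, 0 ≤ q i := by
    intro i
    simp only [hqdef]
    split
    · exact le_refl 0
    · exact add_nonneg (hp.1 i) (mul_nonneg hpi₀nn (hnonneg i))
  set t : ℝ := 1 - p i₀ * (1 - s) with htdef
  have ht : ∑ i, q i = t := by
    simp only [hqdef]
    rw [hsplit]
    rw [Finset.sum_add_distrib, ← Finset.mul_sum, hp.2, ← hsdef, hlam₀]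
    ring
  have htpos : 0 < t := by nlinarith
  have htle : t ≤ 1 := by nlinarith
  have key : ∀ j, ∑ i, q i * O i j = ∑ i, p i * O i j := by
    intro j
    have : ∀ i, q i * O i j = if i = i₀ then 0 else (p i + p i₀ * lam i) * O i j := by
      intro i
      simp only [hqdef]
      split <;> simp
    rw [Finset.sum_congr rfl fun i _ => this i, hsplit]
    have expand : ∀ i, (p i + p i₀ * lam i) * O i j = p i * O i j + p i₀ * (lam i * O i j) := by
      intro i; ring
    rw [Finset.sum_congr rfl fun i _ => expand i, Finset.sum_add_distrib, ← Finset.mul_sum,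
      ← heq j, hlam₀]
    ring
  set q' : Fin m → ℝ := fun i => q i / t with hq'def
  have hq'mem : q' ∈ stdSimplex ℝ (Fin m) ∧ ∀ i ∉ Finset.univ.erase i₀, q' i = 0 := by
    refine ⟨⟨fun i => div_nonneg (hqnn i) htpos.le, ?_⟩, ?_⟩
    · simp only [hq'def]
      rw [← Finset.sum_div, ht, div_self htpos.ne']
    · intro i hi
      simp only [Finset.mem_erase, Finset.mem_univ, and_true, not_not] at hi
      subst hi
      simp [hq'def, hqdef]
  haveI : Nonempty (Fin n) := ⟨⟨0, hn⟩⟩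
  refine le_trans ?_ (le_ciSup hbB ⟨q', hq'mem⟩)
  show minPay O p ≤ ⨅ j : Fin n, ∑ i, q' i * O i j
  refine le_ciInf fun j => ?_
  have h1 : minPay O p ≤ ∑ i, p i * O i j :=
    ciInf_le (Set.Finite.bddBelow (Set.finite_range _)) j
  refine h1.trans ?_
  have hpay : (0:ℝ) ≤ ∑ i, p i * O i j :=
    Finset.sum_nonneg fun i _ => mul_nonneg (hp.1 i) (hpos i j).le
  have h2 : ∑ i, q' i * O i j = (∑ i, p i * O i j) / t := by
    simp only [hq'def, div_mul_eq_mul_div]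
    rw [← Finset.sum_div, key j]
  rw [h2, le_div_iff₀ htpos]
  nlinarith
end

section
/- (Proposition 1, subset form) For any payoff matrix O : Fin m → Fin n → ℝ with m ≥ n ≥ 1, there exists a nonempty finite subset S ⊆ Fin m of rows with |S| ≤ n such that the value of the game restricted to S equals the value of the full game: val_S O = val O. In other words, the row player needs at most as many actions as the column player has columns to achieve the value of the game. -/
open Finset

section Aux

variable {m n : ℕ}

lemma minPay_eq_inf' [Nonempty (Fin n)] (O : Fin m → Fin n → ℝ) (p : Fin m → ℝ) :
    minPay O p = univ.inf' univ_nonempty (fun j => ∑ i, p i * O i j) :=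
  (Finset.inf'_univ_eq_ciInf _).symm

lemma minPay_le [Nonempty (Fin n)] (O : Fin m → Fin n → ℝ) (p : Fin m → ℝ) (j : Fin n) :
    minPay O p ≤ ∑ i, p i * O i j :=
  ciInf_le (Set.Finite.bddBelow (Set.finite_range _)) j

lemma le_minPay [Nonempty (Fin n)] (O : Fin m → Fin n → ℝ) (p : Fin m → ℝ) (c : ℝ)
    (h : ∀ j, c ≤ ∑ i, p i * O i j) : c ≤ minPay O p :=
  le_ciInf h

lemma minPay_congr (O : Fin m → Fin n → ℝ) (p q : Fin m → ℝ)
    (h : ∀ j, ∑ i, p i * O i j = ∑ i, q i * O i j) : minPay O p = minPay O q := by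
  unfold minPay
  exact congrArg _ (funext h)

lemma continuous_minPay [Nonempty (Fin n)] (O : Fin m → Fin n → ℝ) :
    Continuous (minPay O) := by
  have h : minPay O = fun p => univ.inf' univ_nonempty (fun j => ∑ i, p i * O i j) :=
    funext (minPay_eq_inf' O)
  rw [h]
  exact Continuous.finset_inf'_apply univ_nonempty
    (fun j _ => continuous_finset_sum _ fun i _ => (continuous_apply i).mul continuous_const)

lemma exists_optimal [Nonempty (Fin m)] [Nonempty (Fin n)] (O : Fin m → Fin n → ℝ) :
    ∃ q ∈ stdSimplex ℝ (Fin m), ∀ p ∈ stdSimplex ℝ (Fin m), minPay O p ≤ minPay O q := by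
  classical
  obtain ⟨i0⟩ := (inferInstance : Nonempty (Fin m))
  have hne : (stdSimplex ℝ (Fin m)).Nonempty := by
    refine ⟨fun i => if i = i0 then 1 else 0, fun i => by positivity, ?_⟩
    simp
  obtain ⟨q, hq, hmax⟩ :=
    (isCompact_stdSimplex ℝ (Fin m)).exists_isMaxOn hne (continuous_minPay O).continuousOn
  exact ⟨q, hq, fun p hp => hmax hp⟩

lemma gameVal_eq_of_optimal [Nonempty (Fin n)] (O : Fin m → Fin n → ℝ) (q : Fin m → ℝ)
    (hq : q ∈ stdSimplex ℝ (Fin m))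
    (hmax : ∀ p ∈ stdSimplex ℝ (Fin m), minPay O p ≤ minPay O q) :
    gameVal O = minPay O q := by
  haveI : Nonempty {p : Fin m → ℝ // p ∈ stdSimplex ℝ (Fin m)} := ⟨⟨q, hq⟩⟩
  have hbdd : BddAbove (Set.range
      (fun p : {p : Fin m → ℝ // p ∈ stdSimplex ℝ (Fin m)} => minPay O p.1)) := by
    refine ⟨minPay O q, ?_⟩
    rintro x ⟨p, rfl⟩
    exact hmax p.1 p.2
  refine le_antisymm (ciSup_le fun p => hmax p.1 p.2) ?_
  exact le_ciSup hbdd ⟨q, hq⟩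

/-- Extending coefficients from a subset by zero: sums agree. -/
lemma sum_dite_mul (T : Finset (Fin m)) (c : {x // x ∈ T} → ℝ) (f : Fin m → ℝ) :
    ∑ i, (if h : i ∈ T then c ⟨i, h⟩ else 0) * f i
      = ∑ i : {x // x ∈ T}, c i * f i.1 := by
  classical
  rw [← Finset.sum_subset (Finset.subset_univ T)
    (fun x _ hx => by simp [hx])]
  rw [← Finset.sum_attach T (fun i => (if h : i ∈ T then c ⟨i, h⟩ else 0) * f i)]
  exact Finset.sum_congr rfl fun i _ => by simp [i.2]

/-- The key support-reduction lemma: from any optimal strategy we can get one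
whose support has at most `n` rows. -/
lemma reduce_support [Nonempty (Fin n)] (O : Fin m → Fin n → ℝ) :
    ∀ (k : ℕ) (q : Fin m → ℝ), q ∈ stdSimplex ℝ (Fin m) →
      (∀ p ∈ stdSimplex ℝ (Fin m), minPay O p ≤ minPay O q) →
      (univ.filter (fun i => q i ≠ 0)).card ≤ k →
      ∃ q', q' ∈ stdSimplex ℝ (Fin m) ∧
        (∀ p ∈ stdSimplex ℝ (Fin m), minPay O p ≤ minPay O q') ∧
        (univ.filter (fun i => q' i ≠ 0)).card ≤ n := by
  classical
  intro k
  induction k with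
  | zero =>
    intro q hq hopt hcard
    exact ⟨q, hq, hopt, le_trans hcard (Nat.zero_le n)⟩
  | succ k ih =>
    intro q hq hopt hcard
    set T : Finset (Fin m) := univ.filter (fun i => q i ≠ 0) with hT
    by_cases hle : T.card ≤ n
    · exact ⟨q, hq, hopt, hle⟩
    push_neg at hle
    have hTpos : ∀ i ∈ T, 0 < q i := by
      intro i hi
      have h1 : q i ≠ 0 := by
        have := Finset.mem_filter.mp hi
        exact this.2
      exact lt_of_le_of_ne (hq.1 i) (Ne.symm h1)
    have hTne : T.Nonempty := Finset.card_pos.mp (lt_of_le_of_lt (Nat.zero_le n) hle)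
    have hTq0 : ∀ i, i ∉ T → q i = 0 := by
      intro i hi
      by_contra h
      exact hi (Finset.mem_filter.mpr ⟨Finset.mem_univ i, h⟩)
    -- the vectors (row of O, 1) for rows in the support
    set w : {x // x ∈ T} → (Fin n → ℝ) × ℝ := fun i => (fun j => O i.1 j, 1) with hw
    by_cases hli : LinearIndependent ℝ w
    · -- Case B: independent; then card T = n+1 and we can strictly improve: contradiction
      exfalso
      have hfr : Module.finrank ℝ ((Fin n → ℝ) × ℝ) = n + 1 := by
        simp [Module.finrank_prod]
      have hcardle : Fintype.card {x // x ∈ T} ≤ n + 1 := by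
        have := hli.fintype_card_le_finrank
        rwa [hfr] at this
      have hcoe := Fintype.card_coe T
      have hcardT : Fintype.card {x // x ∈ T} = n + 1 := by omega
      haveI : Nonempty {x // x ∈ T} := ⟨⟨hTne.choose, hTne.choose_spec⟩⟩
      have hspan : Submodule.span ℝ (Set.range w) = ⊤ :=
        hli.span_eq_top_of_card_eq_finrank (by rw [hcardT, hfr])
      have hmem : ((fun _ => (1 : ℝ)), (0 : ℝ)) ∈ Submodule.span ℝ (Set.range w) := by
        rw [hspan]; trivial
      obtain ⟨c, hc⟩ := (Submodule.mem_span_range_iff_exists_fun ℝ).mp hmem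
      have hcsum : ∑ i : {x // x ∈ T}, c i = 0 := by
        have h2 := congrArg Prod.snd hc
        simpa [hw, Prod.snd_sum, smul_eq_mul] using h2
      have hcpay : ∀ j, ∑ i : {x // x ∈ T}, c i * O i.1 j = 1 := by
        intro j
        have h1 := congrArg (fun v => v.1 j) hc
        simpa [hw, Prod.fst_sum, Finset.sum_apply, smul_eq_mul] using h1
      set d : Fin m → ℝ := fun i => if h : i ∈ T then c ⟨i, h⟩ else 0 with hd
      have hdT : ∀ i, i ∉ T → d i = 0 := fun i hi => by simp [hd, hi]
      have hdsum : ∑ i, d i = 0 := by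
        calc ∑ i, d i = ∑ i, d i * (fun _ => (1 : ℝ)) i := by simp
          _ = ∑ i : {x // x ∈ T}, c i * (fun _ => (1 : ℝ)) i.1 := by
              simp only [hd]; exact sum_dite_mul T c _
          _ = 0 := by simpa using hcsum
      have hdpay : ∀ j, ∑ i, d i * O i j = 1 := by
        intro j
        calc ∑ i, d i * O i j = ∑ i : {x // x ∈ T}, c i * O i.1 j := by
              simp only [hd]; exact sum_dite_mul T c _
          _ = 1 := hcpay j
      -- now perturb q in direction d to strictly improve
      set a : ℝ := T.inf' hTne q with ha
      have hapos : 0 < a := by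
        rw [ha, Finset.lt_inf'_iff]
        exact fun i hi => hTpos i hi
      set M : ℝ := T.sup' hTne (fun i => |d i|) with hM
      have hMnonneg : 0 ≤ M := by
        rw [hM]
        exact le_trans (abs_nonneg (d hTne.choose)) (Finset.le_sup' (fun i => |d i|) hTne.choose_spec)
      set t : ℝ := a / (M + 1) with ht
      have htpos : 0 < t := div_pos hapos (by linarith)
      have htM : t * (M + 1) = a := by
        rw [ht, div_mul_cancel₀]
        linarith
      set q' : Fin m → ℝ := fun i => q i + t * d i with hq'
      have hq'mem : q' ∈ stdSimplex ℝ (Fin m) := by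
        constructor
        · intro i
          by_cases hi : i ∈ T
          · have h1 : |d i| ≤ M := by rw [hM]; exact Finset.le_sup' (fun i => |d i|) hi
            have h2 : a ≤ q i := by rw [ha]; exact Finset.inf'_le _ hi
            have h5 : -|d i| ≤ d i := neg_abs_le _
            simp only [hq']
            nlinarith
          · simp [hq', hdT i hi, hq.1 i]
        · simp only [hq']
          rw [Finset.sum_add_distrib, hq.2, ← Finset.mul_sum, hdsum, mul_zero, add_zero]
      have hpay : ∀ j, ∑ i, q' i * O i j = (∑ i, q i * O i j) + t := by
        intro j
        simp only [hq', add_mul]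
        rw [Finset.sum_add_distrib]
        congr 1
        calc ∑ i, t * d i * O i j = t * ∑ i, d i * O i j := by
              rw [Finset.mul_sum]
              exact Finset.sum_congr rfl fun i _ => (mul_assoc _ _ _)
          _ = t := by rw [hdpay j, mul_one]
      have hgt : minPay O q + t ≤ minPay O q' := by
        refine le_minPay O q' _ fun j => ?_
        rw [hpay j]
        exact add_le_add_left (minPay_le O q j) t
      have := hopt q' hq'mem
      linarith
    · -- Case A: dependent; we can reduce the support
      obtain ⟨g, hg0, i1, hgi1⟩ := Fintype.not_linearIndependent_iff.mp hli
      have hgsum : ∑ i : {x // x ∈ T}, g i = 0 := by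
        have h2 := congrArg Prod.snd hg0
        simpa [hw, Prod.snd_sum, smul_eq_mul] using h2
      have hgpay : ∀ j, ∑ i : {x // x ∈ T}, g i * O i.1 j = 0 := by
        intro j
        have h1 := congrArg (fun v => v.1 j) hg0
        simpa [hw, Prod.fst_sum, Finset.sum_apply, smul_eq_mul] using h1
      set d : Fin m → ℝ := fun i => if h : i ∈ T then g ⟨i, h⟩ else 0 with hd
      have hdT : ∀ i, i ∉ T → d i = 0 := fun i hi => by simp [hd, hi]
      have hdsum : ∑ i, d i = 0 := by
        calc ∑ i, d i = ∑ i, d i * (fun _ => (1 : ℝ)) i := by simp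
          _ = ∑ i : {x // x ∈ T}, g i * (fun _ => (1 : ℝ)) i.1 := by
              simp only [hd]; exact sum_dite_mul T g _
          _ = 0 := by simpa using hgsum
      have hdpay : ∀ j, ∑ i, d i * O i j = 0 := by
        intro j
        calc ∑ i, d i * O i j = ∑ i : {x // x ∈ T}, g i * O i.1 j := by
              simp only [hd]; exact sum_dite_mul T g _
          _ = 0 := hgpay j
      -- there is an index with positive coefficient
      have hpos : ∃ i : {x // x ∈ T}, 0 < g i := by
        by_contra h
        push_neg at h
        have : ∀ i ∈ (Finset.univ : Finset {x // x ∈ T}), g i = 0 := by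
          rw [← Finset.sum_eq_zero_iff_of_nonpos (fun i _ => h i)]
          exact hgsum
        exact hgi1 (this i1 (Finset.mem_univ _))
      obtain ⟨ip, hip⟩ := hpos
      set T' : Finset (Fin m) := T.filter (fun i => 0 < d i) with hT'
      have hipT' : ip.1 ∈ T' := by
        refine Finset.mem_filter.mpr ⟨ip.2, ?_⟩
        simpa [hd, ip.2] using hip
      have hT'ne : T'.Nonempty := ⟨ip.1, hipT'⟩
      set t : ℝ := T'.inf' hT'ne (fun i => q i / d i) with htdef
      have htpos : 0 < t := by
        rw [htdef, Finset.lt_inf'_iff]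
        intro i hi
        have hiT : i ∈ T := (Finset.mem_filter.mp hi).1
        have hdi : 0 < d i := (Finset.mem_filter.mp hi).2
        exact div_pos (hTpos i hiT) hdi
      obtain ⟨i0, hi0T', hi0⟩ := Finset.exists_mem_eq_inf' hT'ne (fun i => q i / d i)
      have hi0T : i0 ∈ T := (Finset.mem_filter.mp hi0T').1
      have hdi0 : 0 < d i0 := (Finset.mem_filter.mp hi0T').2
      set q' : Fin m → ℝ := fun i => q i - t * d i with hq'
      have hq'i0 : q' i0 = 0 := by
        have hti0 : t = q i0 / d i0 := by rw [htdef, hi0]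
        simp only [hq', hti0, div_mul_cancel₀ _ (ne_of_gt hdi0), sub_self]
      have hq'mem : q' ∈ stdSimplex ℝ (Fin m) := by
        constructor
        · intro i
          by_cases hdi : 0 < d i
          · have hiT : i ∈ T := by
              by_contra h
              rw [hdT i h] at hdi
              exact lt_irrefl 0 hdi
            have hiT' : i ∈ T' := Finset.mem_filter.mpr ⟨hiT, hdi⟩
            have h1 : t ≤ q i / d i := Finset.inf'_le _ hiT'
            have h2 : t * d i ≤ q i := by
              rw [← le_div_iff₀ hdi]
              exact h1
            simp only [hq']
            linarith
          · push_neg at hdi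
            have h1 : t * d i ≤ 0 := mul_nonpos_of_nonneg_of_nonpos htpos.le hdi
            have h2 := hq.1 i
            simp only [hq']
            linarith
        · simp only [hq']
          rw [Finset.sum_sub_distrib, hq.2, ← Finset.mul_sum, hdsum, mul_zero, sub_zero]
      have hpay : ∀ j, ∑ i, q' i * O i j = ∑ i, q i * O i j := by
        intro j
        simp only [hq', sub_mul]
        rw [Finset.sum_sub_distrib]
        have : ∑ i, t * d i * O i j = 0 := by
          calc ∑ i, t * d i * O i j = t * ∑ i, d i * O i j := by
                rw [Finset.mul_sum]
                exact Finset.sum_congr rfl fun i _ => (mul_assoc _ _ _)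
            _ = 0 := by rw [hdpay j, mul_zero]
        rw [this, sub_zero]
      have hopt' : ∀ p ∈ stdSimplex ℝ (Fin m), minPay O p ≤ minPay O q' := by
        intro p hp
        rw [minPay_congr O q' q hpay]
        exact hopt p hp
      -- the support strictly decreased
      have hsub : (univ.filter (fun i => q' i ≠ 0)) ⊆ T.erase i0 := by
        intro i hi
        have hne : q' i ≠ 0 := (Finset.mem_filter.mp hi).2
        have hiT : i ∈ T := by
          by_contra h
          have : q' i = 0 := by
            simp only [hq']
            rw [hTq0 i h, hdT i h, mul_zero, sub_zero]
          exact hne this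
        refine Finset.mem_erase.mpr ⟨?_, hiT⟩
        intro h
        rw [h] at hne
        exact hne hq'i0
      have hcard' : (univ.filter (fun i => q' i ≠ 0)).card ≤ k := by
        have h1 := Finset.card_le_card hsub
        have h2 := Finset.card_erase_of_mem hi0T
        omega
      exact ih q' hq'mem hopt' hcard'

end Aux

/-- (Proposition 1, subset form) The row player needs at most `n` rows to
achieve the value of the game. -/
theorem exists_small_row_subset_achieving_value {m n : ℕ} (hn : 1 ≤ n) (hmn : n ≤ m)
    (O : Fin m → Fin n → ℝ) :
    ∃ S : Finset (Fin m), S.Nonempty ∧ S.card ≤ n ∧ gameValOn O S = gameVal O := by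
  classical
  haveI : Nonempty (Fin n) := Fin.pos_iff_nonempty.mp hn
  haveI : Nonempty (Fin m) := Fin.pos_iff_nonempty.mp (lt_of_lt_of_le hn hmn)
  obtain ⟨q0, hq0, hopt0⟩ := exists_optimal O
  obtain ⟨q, hq, hopt, hcard⟩ :=
    reduce_support O (univ.filter (fun i => q0 i ≠ 0)).card q0 hq0 hopt0 le_rfl
  set S : Finset (Fin m) := univ.filter (fun i => q i ≠ 0) with hS
  have hqS : ∀ i ∉ S, q i = 0 := by
    intro i hi
    by_contra h
    exact hi (Finset.mem_filter.mpr ⟨Finset.mem_univ i, h⟩)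
  refine ⟨S, ?_, hcard, ?_⟩
  · have : ∃ i, q i ≠ 0 := by
      by_contra h
      push_neg at h
      have h2 := hq.2
      simp [h] at h2
    obtain ⟨i, hi⟩ := this
    exact ⟨i, Finset.mem_filter.mpr ⟨Finset.mem_univ i, hi⟩⟩
  · rw [gameVal_eq_of_optimal O q hq hopt]
    haveI : Nonempty {p : Fin m → ℝ //
        p ∈ stdSimplex ℝ (Fin m) ∧ ∀ i ∉ S, p i = 0} := ⟨⟨q, hq, hqS⟩⟩
    have hbdd : BddAbove (Set.range
        (fun p : {p : Fin m → ℝ // p ∈ stdSimplex ℝ (Fin m) ∧ ∀ i ∉ S, p i = 0} =>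
          minPay O p.1)) := by
      refine ⟨minPay O q, ?_⟩
      rintro x ⟨p, rfl⟩
      exact hopt p.1 p.2.1
    refine le_antisymm (ciSup_le fun p => hopt p.1 p.2.1) ?_
    exact le_ciSup hbdd ⟨q, hq, hqS⟩
end

section
/- (Proposition 1, support form) For any payoff matrix O : Fin m → Fin n → ℝ with m ≥ 1 and n ≥ 1, there exists an optimal mixed strategy for the row player whose support has size at most n: there is p* ∈ stdSimplex ℝ (Fin m) with min_{j ∈ Fin n} Σ_i p* i * O i j = val O and |{i : p* i ≠ 0}| ≤ n. -/
section Aux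

variable {m n : ℕ}

lemma aux_minPay_le (hn : 1 ≤ n) (O : Fin m → Fin n → ℝ) (p : Fin m → ℝ) (j : Fin n) :
    minPay O p ≤ ∑ i, p i * O i j := by
  haveI : Nonempty (Fin n) := ⟨⟨0, hn⟩⟩
  exact ciInf_le (Set.Finite.bddBelow (Set.finite_range _)) j

lemma aux_le_minPay (hn : 1 ≤ n) (O : Fin m → Fin n → ℝ) (p : Fin m → ℝ) {v : ℝ}
    (h : ∀ j, v ≤ ∑ i, p i * O i j) : v ≤ minPay O p := by
  haveI : Nonempty (Fin n) := ⟨⟨0, hn⟩⟩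
  exact le_ciInf h

lemma aux_bddAbove (hm : 1 ≤ m) (hn : 1 ≤ n) (O : Fin m → Fin n → ℝ) :
    BddAbove (Set.range fun p : {p : Fin m → ℝ // p ∈ stdSimplex ℝ (Fin m)} => minPay O p.1) := by
  haveI : Nonempty (Fin m) := ⟨⟨0, hm⟩⟩
  set j0 : Fin n := ⟨0, hn⟩
  obtain ⟨B, hBle⟩ : ∃ B : ℝ, ∀ i : Fin m, O i j0 ≤ B :=
    ⟨Finset.univ.sup' Finset.univ_nonempty (fun i => O i j0),
      fun i => Finset.le_sup' (fun i => O i j0) (Finset.mem_univ i)⟩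
  refine ⟨B, ?_⟩
  rintro x ⟨q, rfl⟩
  calc minPay O q.1 ≤ ∑ i, q.1 i * O i j0 := aux_minPay_le hn O q.1 j0
    _ ≤ ∑ i, q.1 i * B := by
        refine Finset.sum_le_sum fun i _ => ?_
        exact mul_le_mul_of_nonneg_left (hBle i) (q.2.1 i)
    _ = B := by rw [← Finset.sum_mul, q.2.2, one_mul]

lemma aux_minPay_le_gameVal (hm : 1 ≤ m) (hn : 1 ≤ n) (O : Fin m → Fin n → ℝ)
    {p : Fin m → ℝ} (hp : p ∈ stdSimplex ℝ (Fin m)) : minPay O p ≤ gameVal O :=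
  le_ciSup (aux_bddAbove hm hn O) ⟨p, hp⟩

lemma aux_exists_max (hm : 1 ≤ m) (hn : 1 ≤ n) (O : Fin m → Fin n → ℝ) :
    ∃ p ∈ stdSimplex ℝ (Fin m), minPay O p = gameVal O := by
  haveI : Nonempty (Fin n) := ⟨⟨0, hn⟩⟩
  haveI : Nonempty (Fin m) := ⟨⟨0, hm⟩⟩
  have hcont : Continuous (minPay O) := by
    have : minPay O = fun p => Finset.univ.inf' Finset.univ_nonempty
        (fun j : Fin n => ∑ i, p i * O i j) := by
      funext p
      rw [minPay, ← Finset.inf'_univ_eq_ciInf]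
    rw [this]
    exact Continuous.finset_inf'_apply _ fun j _ =>
      continuous_finset_sum _ fun i _ => (continuous_apply i).mul continuous_const
  have hne : (stdSimplex ℝ (Fin m)).Nonempty := by
    refine ⟨fun i => if i = ⟨0, hm⟩ then 1 else 0, fun i => ?_, ?_⟩
    · positivity
    · simp
  haveI : Nonempty {p : Fin m → ℝ // p ∈ stdSimplex ℝ (Fin m)} := ⟨⟨_, hne.choose_spec⟩⟩
  obtain ⟨p0, hp0, hmax⟩ := (isCompact_stdSimplex ℝ (Fin m)).exists_isMaxOn hne
    hcont.continuousOn
  refine ⟨p0, hp0, le_antisymm (aux_minPay_le_gameVal hm hn O hp0) (ciSup_le fun q => hmax q.2)⟩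

/-- Key reduction: given any strategy whose payoff against every column is at least `v`
(an upper bound for `minPay` over the simplex), there is one with support of size `≤ n`. -/
lemma aux_reduce (hn : 1 ≤ n) (O : Fin m → Fin n → ℝ) (v : ℝ)
    (hv : ∀ q ∈ stdSimplex ℝ (Fin m), minPay O q ≤ v) (k : ℕ) :
    ∀ p : Fin m → ℝ, p ∈ stdSimplex ℝ (Fin m) →
      (∀ j, v ≤ ∑ i, p i * O i j) →
      (Finset.univ.filter (fun i => p i ≠ 0)).card ≤ k →
      ∃ q ∈ stdSimplex ℝ (Fin m), (∀ j, v ≤ ∑ i, q i * O i j) ∧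
        (Finset.univ.filter (fun i => q i ≠ 0)).card ≤ n := by
  induction k with
  | zero =>
    intro p hp hpay hcard
    exact ⟨p, hp, hpay, by omega⟩
  | succ k ih =>
    intro p hp hpay hcard
    by_cases hle : (Finset.univ.filter (fun i => p i ≠ 0)).card ≤ n
    · exact ⟨p, hp, hpay, hle⟩
    push_neg at hle
    set s : Finset (Fin m) := Finset.univ.filter (fun i => p i ≠ 0) with hs
    have hps : ∀ i ∈ s, 0 < p i := by
      intro i hi
      have h1 : p i ≠ 0 := by simpa [hs] using hi
      exact lt_of_le_of_ne (hp.1 i) (Ne.symm h1)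
    have hpzero : ∀ i, i ∉ s → p i = 0 := by
      intro i hi
      by_contra h
      exact hi (by simpa [hs] using h)
    haveI : Nonempty (Fin n) := ⟨⟨0, hn⟩⟩
    haveI hsne' : Nonempty {x // x ∈ s} := by
      have : 0 < s.card := by omega
      obtain ⟨i, hi⟩ := Finset.card_pos.mp this
      exact ⟨⟨i, hi⟩⟩
    set b : Fin m → (Fin (n+1) → ℝ) := fun i => Fin.cons 1 (O i) with hb
    by_cases hli : LinearIndependent ℝ (fun i : s => b i)
    · -- independent case: impossible
      exfalso
      have hcard' : Fintype.card {x // x ∈ s} = Module.finrank ℝ (Fin (n+1) → ℝ) := by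
        have h1 : Fintype.card {x // x ∈ s} ≤ n + 1 := by
          have := hli.fintype_card_le_finrank
          simpa [Module.finrank_fintype_fun_eq_card] using this
        have h2 : n + 1 ≤ Fintype.card {x // x ∈ s} := by
          simpa [Fintype.card_coe] using hle
        simp only [Module.finrank_fintype_fun_eq_card, Fintype.card_fin]
        omega
      set B := basisOfLinearIndependentOfCardEqFinrank hli hcard' with hBdef
      set w : Fin (n+1) → ℝ := Fin.cons 0 (fun _ => 1) with hw
      set c : Fin m → ℝ := fun i => if h : i ∈ s then B.repr w ⟨i, h⟩ else 0 with hc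
      have hczero : ∀ i, i ∉ s → c i = 0 := fun i hi => by simp [hc, hi]
      have hsum : ∑ i, c i • b i = w := by
        rw [← Finset.sum_subset (Finset.subset_univ s)
          (fun i _ hi => by rw [hczero i hi, zero_smul])]
        rw [← Finset.sum_attach s (fun i => c i • b i)]
        have : ∀ i : s, c i • b i = B.repr w i • B i := by
          intro i
          rw [hc]
          simp only [i.2, dif_pos]
          congr 1
          rw [hBdef, coe_basisOfLinearIndependentOfCardEqFinrank]
        simp_rw [this]
        exact B.sum_repr w
      have h0 : ∑ i, c i = 0 := by
        have := congrFun hsum 0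
        simpa [Finset.sum_apply, hb, hw] using this
      have hcol : ∀ j : Fin n, ∑ i, c i * O i j = 1 := by
        intro j
        have := congrFun hsum j.succ
        simpa [Finset.sum_apply, hb, hw] using this
      -- perturbation
      set ε := s.inf' (Finset.nonempty_coe_sort.mp hsne') p with hε
      have hε0 : 0 < ε := by
        rw [hε, Finset.lt_inf'_iff]
        exact fun i hi => hps i hi
      set C := 1 + s.sup' (Finset.nonempty_coe_sort.mp hsne') (fun i => |c i|) with hC
      have hCc : ∀ i ∈ s, |c i| ≤ C := by
        intro i hi
        have := Finset.le_sup' (fun i => |c i|) hi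
        have h1 : (0:ℝ) ≤ |c i| := abs_nonneg _
        rw [hC]; linarith
      have hC0 : 0 < C := by
        obtain ⟨i, hi⟩ := Finset.nonempty_coe_sort.mp hsne'
        have := hCc i hi
        have := abs_nonneg (c i)
        nlinarith [Finset.le_sup' (fun i => |c i|) hi]
      set t := ε / C with ht
      have ht0 : 0 < t := div_pos hε0 hC0
      set q : Fin m → ℝ := fun i => p i + t * c i with hq
      have htC : ∀ i ∈ s, t * |c i| ≤ ε := by
        intro i hi
        calc t * |c i| ≤ t * C := mul_le_mul_of_nonneg_left (hCc i hi) ht0.le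
          _ = ε := div_mul_cancel₀ _ hC0.ne'
      have hqmem : q ∈ stdSimplex ℝ (Fin m) := by
        constructor
        · intro i
          by_cases hi : i ∈ s
          · have h1 : p i ≥ ε := Finset.inf'_le _ hi
            have h2 : t * c i ≥ -(t * |c i|) := by
              have := neg_abs_le (c i)
              nlinarith
            have := htC i hi
            simp only [hq]
            linarith
          · simp [hq, hczero i hi, hpzero i hi]
        · simp only [hq]
          rw [Finset.sum_add_distrib, hp.2, ← Finset.mul_sum, h0]
          ring
      have hqpay : ∀ j, v + t ≤ ∑ i, q i * O i j := by
        intro j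
        have : ∑ i, q i * O i j = (∑ i, p i * O i j) + t * ∑ i, c i * O i j := by
          simp only [hq]
          rw [Finset.mul_sum, ← Finset.sum_add_distrib]
          congr 1; funext i; ring
        rw [this, hcol j]
        have := hpay j
        linarith
      have h1 : v + t ≤ minPay O q := aux_le_minPay hn O q hqpay
      have h2 : minPay O q ≤ v := hv q hqmem
      linarith
    · -- dependent case: reduce support
      obtain ⟨g, hg0, i₁, hgi⟩ := Fintype.not_linearIndependent_iff.mp hli
      set c : Fin m → ℝ := fun i => if h : i ∈ s then g ⟨i, h⟩ else 0 with hc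
      have hczero : ∀ i, i ∉ s → c i = 0 := fun i hi => by simp [hc, hi]
      have hsum : ∑ i, c i • b i = 0 := by
        rw [← Finset.sum_subset (Finset.subset_univ s)
          (fun i _ hi => by rw [hczero i hi, zero_smul])]
        rw [← Finset.sum_attach s (fun i => c i • b i)]
        have : ∀ i : s, c i • b i = g i • b i := by
          intro i
          rw [hc]; simp [i.2]
        simp_rw [this]
        exact hg0
      have h0 : ∑ i, c i = 0 := by
        have := congrFun hsum 0
        simpa [Finset.sum_apply, hb] using this
      have hcol : ∀ j : Fin n, ∑ i, c i * O i j = 0 := by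
        intro j
        have := congrFun hsum j.succ
        simpa [Finset.sum_apply, hb] using this
      have hcex : ∃ i, 0 < c i := by
        by_contra h
        push_neg at h
        have : ∀ i ∈ Finset.univ, c i = 0 :=
          (Finset.sum_eq_zero_iff_of_nonpos (fun i _ => h i)).mp h0
        have : c i₁ = 0 := this i₁ (Finset.mem_univ _)
        rw [hc] at this
        simp [i₁.2] at this
        exact hgi (by simpa using this)
      set pos : Finset (Fin m) := Finset.univ.filter (fun i => 0 < c i) with hposs
      have hposne : pos.Nonempty := by
        obtain ⟨i, hi⟩ := hcex
        exact ⟨i, by simp [hposs, hi]⟩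
      have hposc : ∀ i ∈ pos, 0 < c i := fun i hi => by simpa [hposs] using hi
      have hposs' : ∀ i ∈ pos, i ∈ s := by
        intro i hi
        by_contra h
        have := hczero i h
        have := hposc i hi
        linarith
      set t := pos.inf' hposne (fun i => p i / c i) with ht
      have ht0 : 0 ≤ t := by
        rw [ht]
        apply Finset.le_inf'
        intro i hi
        exact div_nonneg (hp.1 i) (hposc i hi).le
      obtain ⟨i0, hi0mem, hi0⟩ := Finset.exists_mem_eq_inf' hposne (fun i => p i / c i)
      set q : Fin m → ℝ := fun i => p i - t * c i with hq
      have htv : t = p i0 / c i0 := by rw [ht]; exact hi0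
      have hqi0 : q i0 = 0 := by
        simp only [hq]
        rw [htv, div_mul_cancel₀ _ (hposc i0 hi0mem).ne']
        ring
      have hqnonneg : ∀ i, 0 ≤ q i := by
        intro i
        by_cases hci : 0 < c i
        · have hi : i ∈ pos := by simp [hposs, hci]
          have h1 : t ≤ p i / c i := Finset.inf'_le _ hi
          have h2 : t * c i ≤ p i := (le_div_iff₀ hci).mp h1
          simp only [hq]; linarith
        · push_neg at hci
          have : t * c i ≤ 0 := mul_nonpos_of_nonneg_of_nonpos ht0 hci
          have := hp.1 i
          simp only [hq]; linarith
      have hqmem : q ∈ stdSimplex ℝ (Fin m) := by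
        refine ⟨hqnonneg, ?_⟩
        simp only [hq]
        rw [Finset.sum_sub_distrib, hp.2, ← Finset.mul_sum, h0]
        ring
      have hqpay : ∀ j, v ≤ ∑ i, q i * O i j := by
        intro j
        have : ∑ i, q i * O i j = (∑ i, p i * O i j) - t * ∑ i, c i * O i j := by
          simp only [hq]
          rw [Finset.mul_sum, ← Finset.sum_sub_distrib]
          congr 1; funext i; ring
        rw [this, hcol j]
        have := hpay j
        linarith
      have hsub : Finset.univ.filter (fun i => q i ≠ 0) ⊆ s.erase i0 := by
        intro i hi
        have hqi : q i ≠ 0 := by simpa using hi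
        have hine : i ≠ i0 := fun h => hqi (h ▸ hqi0)
        have his : i ∈ s := by
          by_contra h
          exact hqi (by simp [hq, hczero i h, hpzero i h])
        exact Finset.mem_erase.mpr ⟨hine, his⟩
      have hcard' : (Finset.univ.filter (fun i => q i ≠ 0)).card ≤ k := by
        have h1 := Finset.card_le_card hsub
        have h2 : (s.erase i0).card = s.card - 1 :=
          Finset.card_erase_of_mem (hposs' i0 hi0mem)
        omega
      exact ih q hqmem hqpay hcard'

end Aux

/-- (Proposition 1, support form) There is an optimal mixed strategy for the row
player whose support has size at most `n`. -/
theorem exists_optimal_strategy_small_support {m n : ℕ} (hm : 1 ≤ m) (hn : 1 ≤ n)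
    (O : Fin m → Fin n → ℝ) :
    ∃ p : Fin m → ℝ, p ∈ stdSimplex ℝ (Fin m) ∧ minPay O p = gameVal O ∧
      {i : Fin m | p i ≠ 0}.ncard ≤ n := by
  obtain ⟨p0, hp0, hmax⟩ := aux_exists_max hm hn O
  have hpay : ∀ j, gameVal O ≤ ∑ i, p0 i * O i j := fun j =>
    hmax ▸ aux_minPay_le hn O p0 j
  obtain ⟨q, hq, hqpay, hqcard⟩ := aux_reduce hn O (gameVal O)
    (fun r hr => aux_minPay_le_gameVal hm hn O hr)
    (Finset.univ.filter (fun i => p0 i ≠ 0)).card p0 hp0 hpay le_rfl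
  refine ⟨q, hq, le_antisymm (aux_minPay_le_gameVal hm hn O hq) (aux_le_minPay hn O q hqpay), ?_⟩
  have : {i : Fin m | q i ≠ 0} = ↑(Finset.univ.filter (fun i => q i ≠ 0)) := by
    ext i; simp
  rw [this, Set.ncard_coe_finset]
  exact hqcard
end
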